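/- Let H be a critical 3-hypergraph with |V(H)| ≥ 5 and let 𝒫(H) be its primality graph. Then for every vertex v ∈ V(H), the degree of v in 𝒫(H) is at most 2. -/

import Mathlib

/-- `M` is a module of the hypergraph with vertex set `verts` and edge set `edges`. -/
def IsModule {α : Type*} [DecidableEq α] (verts : Finset α) (edges : Set (Finset α))
    (M : Finset α) : Prop :=
  M ⊆ verts ∧ ∀ e ∈ edges, (e ∩ M).Nonempty → (e \ M).Nonempty →
    ∃ m ∈ M, e ∩ M = {m} ∧ ∀ n ∈ M, (e \ {m}) ∪ {n} ∈ edges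

/-- `(verts, edges)` is a hypergraph: edges are nonempty subsets of `verts`. -/
def IsHypergraph {α : Type*} (verts : Finset α) (edges : Set (Finset α)) : Prop :=
  ∀ e ∈ edges, e ⊆ verts ∧ e.Nonempty

/-- `(verts, edges)` is a 3-hypergraph: edges are 3-element subsets of `verts`. -/
def Is3Hypergraph {α : Type*} (verts : Finset α) (edges : Set (Finset α)) : Prop :=
  ∀ e ∈ edges, e ⊆ verts ∧ e.card = 3

/-- Edges of the subhypergraph induced by `W`. -/
def induceEdges {α : Type*} (W : Finset α) (edges : Set (Finset α)) : Set (Finset α) :=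
  {e ∈ edges | e ⊆ W}

/-- A hypergraph is prime if it has at least 3 vertices and all its modules are trivial. -/
def IsPrime {α : Type*} [DecidableEq α] (verts : Finset α) (edges : Set (Finset α)) : Prop :=
  3 ≤ verts.card ∧ ∀ M, IsModule verts edges M → M = ∅ ∨ M = verts ∨ ∃ v, M = {v}

/-- A prime hypergraph is critical if removing any vertex destroys primality. -/
def IsCritical {α : Type*} [DecidableEq α] (verts : Finset α) (edges : Set (Finset α)) : Prop :=
  IsPrime verts edges ∧
    ∀ v ∈ verts, ¬ IsPrime (verts.erase v) (induceEdges (verts.erase v) edges)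

/-- Adjacency in the primality graph: `v ≠ w` and `H - {v, w}` is prime. -/
def PrimAdj {α : Type*} [DecidableEq α] (verts : Finset α) (edges : Set (Finset α))
    (v w : α) : Prop :=
  v ≠ w ∧ v ∈ verts ∧ w ∈ verts ∧
    IsPrime (verts \ {v, w}) (induceEdges (verts \ {v, w}) edges)


lemma module_restrict {α : Type*} [DecidableEq α] {V W : Finset α} {E : Set (Finset α)}
    {M : Finset α} (hM : IsModule V (induceEdges V E) M) (hWV : W ⊆ V) :
    IsModule W (induceEdges W E) (M ∩ W) := by
  obtain ⟨hMV, hmod⟩ := hM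
  refine ⟨Finset.inter_subset_right, ?_⟩
  intro e he hne1 hne2
  obtain ⟨heE, heW⟩ := he
  have heV : e ∈ induceEdges V E := ⟨heE, heW.trans hWV⟩
  have hinter : e ∩ (M ∩ W) = e ∩ M := by
    ext x
    simp only [Finset.mem_inter]
    exact ⟨fun ⟨a, b, _⟩ => ⟨a, b⟩, fun ⟨a, b⟩ => ⟨a, b, heW a⟩⟩
  have hdiff : e \ (M ∩ W) = e \ M := by
    ext x
    simp only [Finset.mem_sdiff, Finset.mem_inter]
    constructor
    · rintro ⟨hx, hx2⟩
      exact ⟨hx, fun hM' => hx2 ⟨hM', heW hx⟩⟩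
    · rintro ⟨hx, hx2⟩
      exact ⟨hx, fun h => hx2 h.1⟩
  rw [hinter] at hne1
  rw [hdiff] at hne2
  obtain ⟨m, hmM, hm1, hm2⟩ := hmod e heV hne1 hne2
  have hmW : m ∈ W := heW (Finset.mem_inter.mp (hm1 ▸ Finset.mem_singleton_self m)).1
  refine ⟨m, Finset.mem_inter.mpr ⟨hmM, hmW⟩, by rw [hinter, hm1], ?_⟩
  intro n hn
  obtain ⟨hnM, hnW⟩ := Finset.mem_inter.mp hn
  obtain ⟨h1, h2⟩ := hm2 n hnM
  refine ⟨h1, ?_⟩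
  intro x hx
  rcases Finset.mem_union.mp hx with hx | hx
  · exact heW (Finset.mem_sdiff.mp hx).1
  · rwa [Finset.mem_singleton.mp hx]

theorem primality_graph_degree_le_two {α : Type*} [DecidableEq α]
    (verts : Finset α) (edges : Set (Finset α)) (h3 : Is3Hypergraph verts edges)
    (hc : IsCritical verts edges) (h5 : 5 ≤ verts.card) :
    ∀ v w₁ w₂ w₃ : α, PrimAdj verts edges v w₁ → PrimAdj verts edges v w₂ →
      PrimAdj verts edges v w₃ → w₁ = w₂ ∨ w₁ = w₃ ∨ w₂ = w₃ := by
  intro v w₁ w₂ w₃ h₁ h₂ h₃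
  by_contra hcon
  push_neg at hcon
  obtain ⟨h12, h13, h23⟩ := hcon
  obtain ⟨hprime, hcrit⟩ := hc
  have hv : v ∈ verts := h₁.2.1
  have hnp := hcrit v hv
  have hcard4 : 4 ≤ (verts.erase v).card := by
    rw [Finset.card_erase_of_mem hv]; omega
  rw [IsPrime] at hnp
  push_neg at hnp
  obtain ⟨M, hM, hMnt⟩ := hnp (by omega)
  obtain ⟨hM0, hMV, hMs⟩ := hMnt
  have hMc0 : M.card ≠ 0 := Finset.card_ne_zero.mpr hM0
  have hMc1 : M.card ≠ 1 := fun h => by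
    obtain ⟨x, hx⟩ := Finset.card_eq_one.mp h
    exact hMs x hx
  have hMcard : 2 ≤ M.card := by omega
  -- key dichotomy for each neighbor
  have key : ∀ w, PrimAdj verts edges v w →
      (w ∈ M ∧ M.card = 2) ∨ M = verts \ {v, w} := by
    intro w hw
    obtain ⟨hvw, -, hwverts, hWprime⟩ := hw
    set W := verts \ ({v, w} : Finset α) with hWdef
    have hWsub : W ⊆ verts.erase v := by
      intro x hx
      simp only [hWdef, Finset.mem_sdiff, Finset.mem_insert, Finset.mem_singleton] at hx
      exact Finset.mem_erase.mpr ⟨by tauto, hx.1⟩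
    have hmod := module_restrict hM hWsub
    have hMW : M ∩ W = M \ {w} := by
      ext x
      simp only [Finset.mem_inter, Finset.mem_sdiff, hWdef, Finset.mem_insert,
        Finset.mem_singleton]
      constructor
      · rintro ⟨hxM, -, hx⟩
        exact ⟨hxM, by tauto⟩
      · rintro ⟨hxM, hxw⟩
        have hxV := Finset.mem_erase.mp (hM.1 hxM)
        exact ⟨hxM, hxV.2, by tauto⟩
    rw [hMW] at hmod
    rcases hWprime.2 _ hmod with h | h | ⟨x, hx⟩
    · -- M \ {w} = ∅ : impossible since |M| ≥ 2
      exfalso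
      have : M ⊆ {w} := by
        intro x hxM
        by_contra hxw
        exact (Finset.eq_empty_iff_forall_notMem.mp h x)
          (Finset.mem_sdiff.mpr ⟨hxM, hxw⟩)
      have := Finset.card_le_card this
      simp at this
      omega
    · -- M \ {w} = W
      right
      by_cases hwM : w ∈ M
      · exfalso
        apply hMV
        apply Finset.Subset.antisymm (hM.1)
        intro x hxV
        obtain ⟨hxv, hxverts⟩ := Finset.mem_erase.mp hxV
        by_cases hxw : x = w
        · rwa [hxw]
        · have : x ∈ W := by
            simp only [hWdef, Finset.mem_sdiff, Finset.mem_insert, Finset.mem_singleton]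
            exact ⟨hxverts, by tauto⟩
          rw [← h] at this
          exact (Finset.mem_sdiff.mp this).1
      · rw [← h]
        ext x
        simp only [Finset.mem_sdiff, Finset.mem_singleton]
        constructor
        · intro hx
          exact ⟨hx, fun he => hwM (he ▸ hx)⟩
        · exact fun hx => hx.1
    · -- M \ {w} = {x} : then w ∈ M and |M| = 2
      left
      have hwM : w ∈ M := by
        by_contra hwM
        apply hMs x
        rw [← hx]
        ext y
        simp only [Finset.mem_sdiff, Finset.mem_singleton]
        exact ⟨fun hy => ⟨hy, fun he => hwM (he ▸ hy)⟩, fun hy => hy.1⟩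
      refine ⟨hwM, ?_⟩
      have : M.card = (M \ {w}).card + 1 := by
        rw [Finset.sdiff_singleton_eq_erase, Finset.card_erase_of_mem hwM]
        omega
      rw [hx, Finset.card_singleton] at this
      omega
  have hvsub : ∀ w, v ≠ w → w ∈ verts → (verts \ {v, w}).card = verts.card - 2 := by
    intro w hvw hwverts
    rw [Finset.card_sdiff_of_subset (by
      intro x hx
      rcases Finset.mem_insert.mp hx with h | h
      · rwa [h]
      · rw [Finset.mem_singleton.mp h]; exact hwverts)]
    congr 1
    rw [Finset.card_insert_of_notMem (by simpa using hvw), Finset.card_singleton]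
  rcases key w₁ h₁ with h1' | h1' <;> rcases key w₂ h₂ with h2' | h2' <;>
    rcases key w₃ h₃ with h3' | h3'
  · -- all three in M, |M| = 2
    have hsub : ({w₁, w₂, w₃} : Finset α) ⊆ M := by
      intro x hx
      simp only [Finset.mem_insert, Finset.mem_singleton] at hx
      rcases hx with h | h | h <;> rw [h]
      exacts [h1'.1, h2'.1, h3'.1]
    have hcard3 : ({w₁, w₂, w₃} : Finset α).card = 3 := by
      rw [Finset.card_insert_of_notMem (by simp [h12, h13]),
        Finset.card_insert_of_notMem (by simp [h23]), Finset.card_singleton]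
    have := Finset.card_le_card hsub
    rw [hcard3, h1'.2] at this
    omega
  · have := hvsub w₃ h₃.1 h₃.2.2.1
    rw [← h3', h1'.2] at this
    omega
  · have := hvsub w₂ h₂.1 h₂.2.2.1
    rw [← h2', h1'.2] at this
    omega
  · have := hvsub w₂ h₂.1 h₂.2.2.1
    rw [← h2', h1'.2] at this
    omega
  · -- h1' : M = verts \ {v,w₁}, h2' left
    have := hvsub w₁ h₁.1 h₁.2.2.1
    rw [← h1', h2'.2] at this
    omega
  · -- h1' : M = verts \ {v,w₁}, h2' left, h3' right
    have := hvsub w₁ h₁.1 h₁.2.2.1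
    rw [← h1', h2'.2] at this
    omega
  · -- h1' : M = verts \ {v,w₁}, h2' : M = verts \ {v,w₂}
    have hmem : w₂ ∈ M := by
      rw [h1']
      simp only [Finset.mem_sdiff, Finset.mem_insert, Finset.mem_singleton]
      exact ⟨h₂.2.2.1, by push_neg; exact ⟨fun h => h₂.1 h.symm, fun h => h12 h.symm⟩⟩
    rw [h2'] at hmem
    simp at hmem
  · have hmem : w₂ ∈ M := by
      rw [h1']
      simp only [Finset.mem_sdiff, Finset.mem_insert, Finset.mem_singleton]
      exact ⟨h₂.2.2.1, by push_neg; exact ⟨fun h => h₂.1 h.symm, fun h => h12 h.symm⟩⟩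
    rw [h2'] at hmem
    simp at hmem
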